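/- Define a word a₁...aₙ (1 ≤ aᵢ ≤ 2i−1) to be arc-disconnected if there exists k ≥ 2 with a_k = 2k−1 and a_j ≥ 2k−1 for all j > k. Then the number of arc-connected words of length n satisfies the recursion aₙ = (2n−1)!! − Σ_{k=1}^{n−1} (2k−1)!! · a_{n−k}, where a word is arc-connected if it is not arc-disconnected. -/

import Mathlib

/-- A word `w : Fin n → ℕ` (with `1 ≤ w i ≤ 2i+1` for the 0-indexed `i`,
i.e. `1 ≤ a_k ≤ 2k-1` for 1-indexed `k = i+1`) is arc-disconnected if there is
a 1-indexed position `k ≥ 2` with `a_k = 2k-1` and `a_j ≥ 2k-1` for all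
`j > k`. -/
def ArcDisconnectedF (n : ℕ) (w : Fin n → ℕ) : Prop :=
  ∃ k : Fin n, 2 ≤ (k:ℕ) + 1 ∧ w k = 2*((k:ℕ) + 1) - 1 ∧
    ∀ j : Fin n, k < j → 2*((k:ℕ) + 1) - 1 ≤ w j

/-- The number of arc-connected words of length `n`. -/
noncomputable def connCount (n : ℕ) : ℕ :=
  {w : Fin n → ℕ | (∀ i, 1 ≤ w i ∧ w i ≤ 2*(i:ℕ) + 1) ∧
    ¬ ArcDisconnectedF n w}.ncard

open Finset
open scoped Classical

namespace Stmt9Aux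

/-- The finset of all bounded words of length `n`. -/
def Wb (n : ℕ) : Finset (Fin n → ℕ) :=
  Fintype.piFinset (fun i : Fin n => Finset.Icc 1 (2*(i:ℕ)+1))

lemma mem_Wb {n : ℕ} {w : Fin n → ℕ} :
    w ∈ Wb n ↔ ∀ i : Fin n, 1 ≤ w i ∧ w i ≤ 2*(i:ℕ)+1 := by
  simp [Wb, Fintype.mem_piFinset, Finset.mem_Icc]

/-- The finset of arc-connected words of length `n`. -/
noncomputable def Conn (n : ℕ) : Finset (Fin n → ℕ) :=
  (Wb n).filter (fun w => ¬ ArcDisconnectedF n w)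

/-- A witness of disconnectedness at position `k`. -/
def WitAt {n : ℕ} (w : Fin n → ℕ) (k : Fin n) : Prop :=
  1 ≤ (k:ℕ) ∧ w k = 2*(k:ℕ)+1 ∧ ∀ j : Fin n, k < j → 2*(k:ℕ)+1 ≤ w j

lemma arcDisc_iff {n : ℕ} (w : Fin n → ℕ) :
    ArcDisconnectedF n w ↔ ∃ k, WitAt w k := by
  unfold ArcDisconnectedF WitAt
  constructor
  · rintro ⟨k, h1, h2, h3⟩
    exact ⟨k, by omega, by omega, fun j hj => by have := h3 j hj; omega⟩
  · rintro ⟨k, h1, h2, h3⟩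
    exact ⟨k, by omega, by omega, fun j hj => by have := h3 j hj; omega⟩

lemma connCount_eq (n : ℕ) : connCount n = (Conn n).card := by
  rw [connCount, ← Set.ncard_coe_finset]
  congr 1
  ext w
  simp [Conn, mem_Wb, Finset.mem_filter]

lemma df_odd (k : ℕ) :
    Nat.doubleFactorial (2*k+1) = ∏ i ∈ Finset.range (k+1), (2*i+1) := by
  induction k with
  | zero => simp [Nat.doubleFactorial]
  | succ k ih =>
    rw [Finset.prod_range_succ, ← ih]
    have h : 2*(k+1)+1 = (2*k+1)+2 := by ring
    rw [h, Nat.doubleFactorial_add_two]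
    ring

lemma card_Wb (n : ℕ) : (Wb n).card = ∏ i ∈ Finset.range n, (2*i+1) := by
  rw [Wb, Fintype.card_piFinset, ← Fin.prod_univ_eq_prod_range (fun i => 2*i+1) n]
  apply Finset.prod_congr rfl
  intro i _
  rw [Nat.card_Icc]
  omega

/-- `MaxW n k w` : position `k` is the largest witness of disconnectedness. -/
def MaxW (n k : ℕ) (w : Fin n → ℕ) : Prop :=
  ∃ h : k < n, WitAt w ⟨k, h⟩ ∧ ∀ j : Fin n, k < (j:ℕ) → ¬ WitAt w j

noncomputable def Dk (n k : ℕ) : Finset (Fin n → ℕ) := (Wb n).filter (MaxW n k)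

lemma disc_eq_biUnion (n : ℕ) :
    (Wb n).filter (fun w => ArcDisconnectedF n w) =
      (Finset.Icc 1 (n-1)).biUnion (fun k => Dk n k) := by
  ext w
  simp only [mem_filter, mem_biUnion, Dk, MaxW, Finset.mem_Icc, arcDisc_iff]
  constructor
  · rintro ⟨hw, k0, hk0⟩
    set S : Finset (Fin n) := Finset.univ.filter (fun k => WitAt w k) with hSdef
    have hS : S.Nonempty := ⟨k0, by simp [hSdef, hk0]⟩
    set m := S.max' hS with hmdef
    have hmS : m ∈ S := S.max'_mem hS
    have hm : WitAt w m := (Finset.mem_filter.mp hmS).2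
    refine ⟨(m:ℕ), ⟨hm.1, by have := m.isLt; omega⟩, hw, m.isLt, ?_, ?_⟩
    · convert hm using 1
    · intro j hj hwj
      have hjS : j ∈ S := by simp [hSdef, hwj]
      have := S.le_max' j hjS
      rw [← hmdef] at this
      exact absurd (Fin.le_def.mp this) (by omega)
  · rintro ⟨k, hk, hw, h, hwit, _⟩
    exact ⟨hw, ⟨k, h⟩, hwit⟩

lemma Dk_disjoint (n : ℕ) : ∀ x ∈ Finset.Icc 1 (n-1), ∀ y ∈ Finset.Icc 1 (n-1),
    x ≠ y → Disjoint (Dk n x) (Dk n y) := by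
  intro x _ y _ hxy
  rw [Finset.disjoint_left]
  rintro w hwx hwy
  obtain ⟨-, hx1, hx2, hx3⟩ := Finset.mem_filter.mp hwx
  obtain ⟨-, hy1, hy2, hy3⟩ := Finset.mem_filter.mp hwy
  rcases lt_trichotomy x y with h | h | h
  · exact hx3 ⟨y, hy1⟩ h hy2
  · exact hxy h
  · exact hy3 ⟨x, hx1⟩ h hx2

lemma card_Dk (n k : ℕ) (hk1 : 1 ≤ k) (hkn : k < n) :
    (Dk n k).card = (Wb k).card * (Conn (n-k)).card := by
  rw [← Finset.card_product]
  apply Finset.card_bij'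
    (i := fun w _ => (fun i : Fin k => w ⟨i, lt_trans i.isLt hkn⟩,
      fun j : Fin (n-k) => w ⟨k + (j:ℕ), by have := j.isLt; omega⟩ - 2*k))
    (j := fun p _ => fun i : Fin n =>
      if h : (i:ℕ) < k then p.1 ⟨i, h⟩
      else p.2 ⟨(i:ℕ) - k, by have := i.isLt; omega⟩ + 2*k)
  · -- left inverse : glue (split w) = w
    intro w hw
    obtain ⟨hwW, hlt, ⟨-, hwit, hge⟩, -⟩ := Finset.mem_filter.mp hw
    funext i
    by_cases h : (i:ℕ) < k
    · simp [h]
    · simp only [h, dite_false]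
      have h5 : (⟨k + ((i:ℕ) - k), by have := i.isLt; omega⟩ : Fin n) = i :=
        Fin.ext (by simp; omega)
      rw [h5]
      have hbig : 2*k+1 ≤ w i := by
        rcases eq_or_lt_of_le (Nat.le_of_not_lt h) with h' | h'
        · have : i = ⟨k, hkn⟩ := Fin.ext h'.symm
          rw [this, hwit]
        · exact hge i (by rwa [Fin.lt_def])
      omega
  · -- right inverse : split (glue p) = p
    rintro ⟨u, v⟩ hp
    simp only [Prod.mk.injEq]
    constructor
    · funext i
      simp [i.isLt]
    · funext j
      rw [dif_neg (by omega)]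
      have h8 : (⟨k + (j:ℕ) - k, by have := j.isLt; omega⟩ : Fin (n-k)) = j :=
        Fin.ext (by simp)
      rw [h8]
      omega
  · -- hi : image in product
    rintro w hw
    obtain ⟨hwW, hlt, ⟨-, hwit, hge⟩, hmax⟩ := Finset.mem_filter.mp hw
    rw [mem_Wb] at hwW
    have hbig : ∀ i : Fin n, k ≤ (i:ℕ) → 2*k+1 ≤ w i := by
      intro i hi
      rcases eq_or_lt_of_le hi with h | h
      · have : i = ⟨k, hkn⟩ := Fin.ext h.symm
        rw [this, hwit]
      · exact hge i (by rwa [Fin.lt_def])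
    rw [Finset.mem_product]
    constructor
    · rw [mem_Wb]; intro i; exact hwW ⟨i, lt_trans i.isLt hkn⟩
    · refine Finset.mem_filter.mpr ⟨mem_Wb.mpr ?_, ?_⟩
      · intro j
        have h1 := hwW ⟨k + (j:ℕ), by have := j.isLt; omega⟩
        have h2 := hbig ⟨k + (j:ℕ), by have := j.isLt; omega⟩ (by simp)
        simp only at h1 h2 ⊢
        omega
      · -- suffix is connected
        rw [arcDisc_iff]
        rintro ⟨k', h1, h2, h3⟩
        have hkk' : k + (k':ℕ) < n := by have := k'.isLt; omega
        apply hmax ⟨k + (k':ℕ), hkk'⟩ (by simp; omega)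
        refine ⟨by simp; omega, ?_, ?_⟩
        · have hb := hbig ⟨k + (k':ℕ), hkk'⟩ (by simp)
          simp only at h2 ⊢
          omega
        · intro j hj
          rw [Fin.lt_def] at hj
          simp only at hj ⊢
          have hjk : k ≤ (j:ℕ) := by omega
          have h4 := h3 ⟨(j:ℕ) - k, by have := j.isLt; omega⟩ (by rw [Fin.lt_def]; simp; omega)
          have h5 : w ⟨k + ((j:ℕ) - k), by have := j.isLt; omega⟩ = w j := by
            congr 1; exact Fin.ext (by simp; omega)
          simp only at h4
          rw [h5] at h4
          have h6 := hbig j hjk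
          omega
  · -- hj : glue lands in Dk
    rintro ⟨u, v⟩ hp
    rw [Finset.mem_product] at hp
    obtain ⟨huW, hvC⟩ := hp
    rw [mem_Wb] at huW
    obtain ⟨hvW, hvc⟩ := Finset.mem_filter.mp hvC
    rw [mem_Wb] at hvW
    simp only at huW hvW hvc
    have hv0 : v ⟨0, by omega⟩ = 1 := by
      have := hvW ⟨0, by omega⟩; simp at this; omega
    simp only
    refine Finset.mem_filter.mpr ⟨mem_Wb.mpr ?_, ?_⟩
    · intro i
      by_cases h : (i:ℕ) < k
      · simpa [h] using huW ⟨i, h⟩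
      · have := hvW ⟨(i:ℕ) - k, by have := i.isLt; omega⟩
        simp only [h, dite_false] at this ⊢
        omega
    · refine ⟨hkn, ⟨by simpa using hk1, ?_, ?_⟩, ?_⟩
      · simp only [Fin.val_mk]
        rw [dif_neg (by omega)]
        have : (⟨k - k, by omega⟩ : Fin (n-k)) = ⟨0, by omega⟩ := Fin.ext (by simp)
        rw [this, hv0]
        omega
      · intro j hj
        rw [Fin.lt_def] at hj
        simp only at hj ⊢
        rw [dif_neg (by omega)]
        have := (hvW ⟨(j:ℕ) - k, by have := j.isLt; omega⟩).1
        omega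
      · -- maximality
        rintro j hj ⟨-, hwj, hgej⟩
        simp only at hwj hgej
        apply hvc
        rw [arcDisc_iff]
        have hjk : k < (j:ℕ) := hj
        refine ⟨⟨(j:ℕ) - k, by have := j.isLt; omega⟩, by simp; omega, ?_, ?_⟩
        · rw [dif_neg (by omega)] at hwj
          simp only [Fin.val_mk]
          omega
        · intro j' hj'
          rw [Fin.lt_def] at hj'
          simp only [Fin.val_mk] at hj' ⊢
          have h7 := hgej ⟨k + (j':ℕ), by have := j'.isLt; omega⟩ (by rw [Fin.lt_def]; simp; omega)
          simp only at h7
          rw [dif_neg (by simp)] at h7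
          have h8 : (⟨k + (j':ℕ) - k, by have := j'.isLt; omega⟩ : Fin (n-k)) = j' :=
            Fin.ext (by simp)
          rw [h8] at h7
          omega

end Stmt9Aux

theorem stmt_9 (n : ℕ) (hn : 1 ≤ n) :
    connCount n =
      Nat.doubleFactorial (2*n - 1) -
        ∑ k ∈ Finset.Icc 1 (n-1), Nat.doubleFactorial (2*k - 1) * connCount (n - k) := by
  open Stmt9Aux in
  have hD : ((Wb n).filter (fun w => ArcDisconnectedF n w)).card
      = ∑ k ∈ Finset.Icc 1 (n-1), Nat.doubleFactorial (2*k-1) * connCount (n-k) := by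
    rw [disc_eq_biUnion, Finset.card_biUnion (Dk_disjoint n)]
    apply Finset.sum_congr rfl
    intro k hk
    rw [Finset.mem_Icc] at hk
    rw [card_Dk n k hk.1 (by omega), connCount_eq, card_Wb]
    congr 1
    have h2 : 2*k - 1 = 2*(k-1)+1 := by omega
    rw [h2, df_odd, show k-1+1 = k by omega]
  have hT : (Stmt9Aux.Wb n).card = Nat.doubleFactorial (2*n-1) := by
    rw [Stmt9Aux.card_Wb]
    have h2 : 2*n-1 = 2*(n-1)+1 := by omega
    rw [h2, Stmt9Aux.df_odd, show n-1+1 = n by omega]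
  have hsum : ((Stmt9Aux.Wb n).filter (fun w => ArcDisconnectedF n w)).card
      + (Stmt9Aux.Conn n).card = (Stmt9Aux.Wb n).card :=
    Finset.card_filter_add_card_filter_not _
  rw [Stmt9Aux.connCount_eq]
  omega
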